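/- Let H_K be an RKHS on X with continuous kernel K, Ω ⊆ X compact, and μ a finite Borel measure on Ω. For any two closed subspaces U and V of H_K, |E(U) - E(V)| ≤ 2 K_Ω ‖P_U - P_V‖, where E(W) = ∫_Ω dist²(K(t,·), W) dμ(t), K_Ω = ∫_Ω K(t,t) dμ(t), and P_W denotes orthogonal projection onto W. -/

import Mathlib

open MeasureTheory
open scoped RealInnerProductSpace

section Aux
variable {H : Type*} [NormedAddCommGroup H] [InnerProductSpace ℝ H]

lemma aux_infDist_eq (U : Submodule ℝ H) (P : H →L[ℝ] H)
    (hP : ∀ v : H, P v ∈ U ∧ ∀ w ∈ U, ⟪v - P v, w⟫ = 0) (x : H) :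
    Metric.infDist x (U : Set H) = ‖x - P x‖ := by
  have h := (Submodule.norm_eq_iInf_iff_real_inner_eq_zero U (hP x).1).2 (hP x).2
  have : Nonempty (U : Set H) := ⟨⟨0, U.zero_mem⟩⟩
  rw [Metric.infDist_eq_iInf]
  simp only [dist_eq_norm]
  exact h.symm

lemma aux_contr (U : Submodule ℝ H) (P : H →L[ℝ] H)
    (hP : ∀ v : H, P v ∈ U ∧ ∀ w ∈ U, ⟪v - P v, w⟫ = 0) (x : H) :
    ‖x - P x‖ ≤ ‖x‖ := by
  have h0 : ⟪x - P x, P x⟫ = 0 := (hP x).2 _ (hP x).1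
  have hx : ‖x‖ ^ 2 = ‖x - P x‖ ^ 2 + ‖P x‖ ^ 2 := by
    have := norm_add_sq_real (x - P x) (P x)
    simp only [sub_add_cancel, h0] at this
    linarith
  nlinarith [norm_nonneg (x - P x), norm_nonneg x, norm_nonneg (P x)]

lemma aux_cont {X : Type*} [TopologicalSpace X]
    (k : X → H) (K : X → X → ℝ) (hK : ∀ x y : X, K x y = ⟪k x, k y⟫)
    (hKcont : Continuous fun p : X × X => K p.1 p.2) : Continuous k := by
  rw [continuous_iff_continuousAt]
  intro x
  rw [ContinuousAt, tendsto_iff_dist_tendsto_zero]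
  have hsq : ∀ y, dist (k y) (k x) = Real.sqrt (K y y - 2 * K y x + K x x) := by
    intro y
    have : ‖k y - k x‖ ^ 2 = K y y - 2 * K y x + K x x := by
      simp only [norm_sub_sq_real, hK, real_inner_self_eq_norm_sq]
    rw [dist_eq_norm, ← Real.sqrt_sq (norm_nonneg (k y - k x)), this]
  simp only [hsq]
  have h1 : Filter.Tendsto (fun y => K y y - 2 * K y x + K x x) (nhds x)
      (nhds (K x x - 2 * K x x + K x x)) := by
    apply Filter.Tendsto.add _ tendsto_const_nhds
    apply Filter.Tendsto.sub
    · exact (hKcont.comp (continuous_id.prodMk continuous_id)).tendsto x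
    · exact (tendsto_const_nhds.mul
        ((hKcont.comp (continuous_id.prodMk continuous_const)).tendsto x))
  have : (K x x - 2 * K x x + K x x) = 0 := by ring
  rw [this] at h1
  have := (Real.continuous_sqrt.tendsto 0).comp h1
  simpa [Function.comp_def] using this

end Aux

theorem stmt_10 {X : Type*} [TopologicalSpace X] [T2Space X] [MeasurableSpace X]
    [OpensMeasurableSpace X] {H : Type*} [NormedAddCommGroup H] [InnerProductSpace ℝ H]
    [CompleteSpace H]
    (k : X → H) (K : X → X → ℝ) (hK : ∀ x y : X, K x y = ⟪k x, k y⟫)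
    (hKcont : Continuous fun p : X × X => K p.1 p.2)
    (Ω : Set X) (hΩ : IsCompact Ω) (μ : Measure X) [IsFiniteMeasure μ]
    (U V : Submodule ℝ H) (hU : IsClosed (U : Set H)) (hV : IsClosed (V : Set H))
    (P Q : H →L[ℝ] H)
    (hP : ∀ v : H, P v ∈ U ∧ ∀ w ∈ U, ⟪v - P v, w⟫ = 0)
    (hQ : ∀ v : H, Q v ∈ V ∧ ∀ w ∈ V, ⟪v - Q v, w⟫ = 0) :
    |(∫ t in Ω, Metric.infDist (k t) (U : Set H) ^ 2 ∂μ) -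
        ∫ t in Ω, Metric.infDist (k t) (V : Set H) ^ 2 ∂μ| ≤
      2 * (∫ t in Ω, K t t ∂μ) * ‖P - Q‖ := by
  have hkc : Continuous k := aux_cont k K hK hKcont
  have hfU : ∀ t, Metric.infDist (k t) (U : Set H) ^ 2 = ‖k t - P (k t)‖ ^ 2 := fun t => by
    rw [aux_infDist_eq U P hP]
  have hfV : ∀ t, Metric.infDist (k t) (V : Set H) ^ 2 = ‖k t - Q (k t)‖ ^ 2 := fun t => by
    rw [aux_infDist_eq V Q hQ]
  simp only [hfU, hfV]
  set f : X → ℝ := fun t => ‖k t - P (k t)‖ ^ 2 with hf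
  set g : X → ℝ := fun t => ‖k t - Q (k t)‖ ^ 2 with hg
  have hcf : Continuous f := by continuity
  have hcg : Continuous g := by continuity
  have hcK : Continuous fun t => K t t := hKcont.comp (continuous_id.prodMk continuous_id)
  have hif : IntegrableOn f Ω μ := hcf.continuousOn.integrableOn_compact hΩ
  have hig : IntegrableOn g Ω μ := hcg.continuousOn.integrableOn_compact hΩ
  have hiK : IntegrableOn (fun t => 2 * ‖P - Q‖ * K t t) Ω μ :=
    ((hcK.continuousOn.integrableOn_compact hΩ).const_mul (2 * ‖P - Q‖))
  -- pointwise bound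
  have hpt : ∀ t, |f t - g t| ≤ 2 * ‖P - Q‖ * K t t := by
    intro t
    set x := k t
    have ha : ‖x - P x‖ ≤ ‖x‖ := aux_contr U P hP x
    have hb : ‖x - Q x‖ ≤ ‖x‖ := aux_contr V Q hQ x
    have hd : ‖(x - P x) - (x - Q x)‖ ≤ ‖P - Q‖ * ‖x‖ := by
      have : (x - P x) - (x - Q x) = (Q - P) x := by
        simp [ContinuousLinearMap.sub_apply]
      rw [this]
      calc ‖(Q - P) x‖ ≤ ‖Q - P‖ * ‖x‖ := (Q - P).le_opNorm x
        _ = ‖P - Q‖ * ‖x‖ := by rw [norm_sub_rev]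
    have hKtt : K t t = ‖x‖ ^ 2 := by rw [hK]; exact real_inner_self_eq_norm_sq _
    have habs : |‖x - P x‖ - ‖x - Q x‖| ≤ ‖(x - P x) - (x - Q x)‖ :=
      abs_norm_sub_norm_le _ _
    rw [hKtt]
    have h1 : f t - g t = (‖x - P x‖ - ‖x - Q x‖) * (‖x - P x‖ + ‖x - Q x‖) := by
      simp only [hf, hg]; ring
    rw [h1, abs_mul]
    have h2 : |‖x - P x‖ + ‖x - Q x‖| ≤ 2 * ‖x‖ := by
      rw [abs_of_nonneg (by positivity)]; linarith
    calc |‖x - P x‖ - ‖x - Q x‖| * |‖x - P x‖ + ‖x - Q x‖|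
        ≤ (‖P - Q‖ * ‖x‖) * (2 * ‖x‖) := by
          exact mul_le_mul (habs.trans hd) h2 (abs_nonneg _) (by positivity)
      _ = 2 * ‖P - Q‖ * ‖x‖ ^ 2 := by ring
  calc |(∫ t in Ω, f t ∂μ) - ∫ t in Ω, g t ∂μ|
      = |∫ t in Ω, (f t - g t) ∂μ| := by rw [integral_sub hif hig]
    _ ≤ ∫ t in Ω, |f t - g t| ∂μ := by
        have := norm_integral_le_integral_norm (μ := μ.restrict Ω) (f := fun t => f t - g t)
        simpa [Real.norm_eq_abs] using this
    _ ≤ ∫ t in Ω, 2 * ‖P - Q‖ * K t t ∂μ := by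
        apply integral_mono_of_nonneg (Filter.Eventually.of_forall fun t => abs_nonneg _) hiK
        exact Filter.Eventually.of_forall fun t => hpt t
    _ = 2 * (∫ t in Ω, K t t ∂μ) * ‖P - Q‖ := by
        rw [integral_const_mul]; ring
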